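/- Let Γ be d-Ahlfors regular with measure σ. For each Whitney cube Q of Ω = ℝⁿ \ Γ let ξ_Q ∈ 60Q ∩ Γ and α_Q = α_σ(ξ_Q, 2^{10} ℓ(Q)). Suppose μ_Q = c_Q μ_{P_Q} is a flat measure with dist_{ξ_Q, 2^{10}ℓ(Q)}(μ_Q, σ) ≤ 2α_Q. Then there is ε > 0 depending only on C_σ, d, n such that if α_Q ≤ ε then: dist(ξ_Q, P_Q) ≤ 5ℓ(Q), dist(2Q, P_Q) ≥ 5ℓ(Q)/√n, and ε ≤ c_Q ≤ 1/ε. -/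

import Mathlib

open MeasureTheory Metric Set

noncomputable section

/-- `Lip x r`: the set of 1-Lipschitz functions supported in the closed ball `B̄(x,r)`. -/
def LipIn {E : Type*} [NormedAddCommGroup E] (x : E) (r : ℝ) : Set (E → ℝ) :=
  {f | LipschitzWith 1 f ∧ ∀ y ∉ closedBall x r, f y = 0}

/-- Normalized Wasserstein distance `dist_{x,r}(μ,ν)`. -/
def wdist {E : Type*} [NormedAddCommGroup E] [MeasurableSpace E] (d : ℕ) (x : E) (r : ℝ)
    (μ ν : Measure E) : ℝ :=
  r ^ (-(d : ℝ) - 1) * ⨆ f : LipIn x r, |∫ y, f.1 y ∂μ - ∫ y, f.1 y ∂ν|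

/-- A flat measure: a positive multiple of the `d`-dimensional Hausdorff measure on an
affine `d`-plane. -/
def IsFlatMeasure {E : Type*} [NormedAddCommGroup E] [NormedSpace ℝ E]
    [MeasurableSpace E] [BorelSpace E] (d : ℕ) (μ : Measure E) : Prop :=
  ∃ (c : ℝ) (P : AffineSubspace ℝ E), 0 < c ∧ (P : Set E).Nonempty ∧
    Module.finrank ℝ P.direction = d ∧
    μ = ENNReal.ofReal c • (μH[(d : ℝ)]).restrict (P : Set E)

/-- Tolsa's α-number `α_σ(x,r)`. -/
def alphaNum {E : Type*} [NormedAddCommGroup E] [NormedSpace ℝ E]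
    [MeasurableSpace E] [BorelSpace E] (d : ℕ) (σ : Measure E) (x : E) (r : ℝ) : ℝ :=
  ⨅ μ : {μ : Measure E // IsFlatMeasure d μ}, wdist d x r σ μ.1

/-- `σ` is `d`-Ahlfors regular on `Γ` with constant `C`. -/
def AhlforsRegular {E : Type*} [NormedAddCommGroup E] [MeasurableSpace E]
    (σ : Measure E) (Γ : Set E) (d : ℝ) (C : ℝ) : Prop :=
  ∀ x ∈ Γ, ∀ r > 0, ENNReal.ofReal (C⁻¹ * r ^ d) ≤ σ (ball x r) ∧
    σ (ball x r) ≤ ENNReal.ofReal (C * r ^ d)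

/-- The dilate `kQ` of the axis-parallel cube with center `z` and sidelength `s`. -/
def cubeDilate (n : ℕ) (z : EuclideanSpace ℝ (Fin n)) (s k : ℝ) :
    Set (EuclideanSpace ℝ (Fin n)) :=
  {X | ∀ i, |X i - z i| ≤ k * s / 2}

section Helpers
open Module
open scoped NNReal ENNReal

section Tent
/-- tent function -/
def tent {X : Type*} [PseudoMetricSpace X] (p : X) (ρ : ℝ) (y : X) : ℝ :=
  max (ρ - dist y p) 0

variable {X : Type*} [PseudoMetricSpace X]

lemma tent_nonneg (p : X) (ρ : ℝ) (y : X) : 0 ≤ tent p ρ y := le_max_right _ _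

lemma tent_le (p : X) {ρ : ℝ} (hρ : 0 ≤ ρ) (y : X) : tent p ρ y ≤ ρ :=
  max_le (by simp [dist_nonneg]) hρ

lemma tent_eq_zero (p : X) {ρ : ℝ} {y : X} (h : ρ ≤ dist y p) : tent p ρ y = 0 :=
  max_eq_right (by linarith)

lemma tent_half (p : X) {ρ : ℝ} {y : X} (h : dist y p ≤ ρ / 2) : ρ / 2 ≤ tent p ρ y :=
  le_max_of_le_left (by linarith)

lemma tent_lipschitz (p : X) (ρ : ℝ) : LipschitzWith 1 (tent p ρ) := by
  refine LipschitzWith.of_dist_le_mul fun y z => ?_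
  simp only [NNReal.coe_one, one_mul, Real.dist_eq]
  calc |tent p ρ y - tent p ρ z| ≤ |(ρ - dist y p) - (ρ - dist z p)| :=
        abs_max_sub_max_le_abs _ _ _
    _ = |dist z p - dist y p| := by ring_nf
    _ ≤ dist z y := abs_dist_sub_le _ _ _
    _ = dist y z := dist_comm _ _

lemma tent_continuous (p : X) (ρ : ℝ) : Continuous (tent p ρ) :=
  (tent_lipschitz p ρ).continuous

lemma tent_eq_zero' (p : X) {ρ : ℝ} {y : X} (hy : y ∉ ball p ρ) : tent p ρ y = 0 :=
  tent_eq_zero p (not_lt.mp fun h => hy (mem_ball.mpr h))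

lemma tent_support (p : X) (ρ : ℝ) : Function.support (tent p ρ) ⊆ ball p ρ := by
  intro y hy
  by_contra h
  exact hy (tent_eq_zero p (by simpa [dist_comm] using h))

variable [MeasurableSpace X] [OpensMeasurableSpace X] (ν : Measure X)

lemma tent_integrable {p : X} {ρ : ℝ} (hρ : 0 ≤ ρ) (hfin : ν (ball p ρ) ≠ ⊤) :
    Integrable (tent p ρ) ν := by
  have hg : Integrable ((ball p ρ).indicator fun _ => ρ) ν :=
    (integrableOn_const hfin).integrable_indicator measurableSet_ball
  refine hg.mono' ((tent_continuous p ρ).aestronglyMeasurable)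
      (Filter.Eventually.of_forall fun y => ?_)
  rw [Real.norm_eq_abs, abs_of_nonneg (tent_nonneg _ _ _)]
  by_cases hy : y ∈ ball p ρ
  · rw [indicator_of_mem hy]; exact tent_le p hρ y
  · rw [indicator_of_notMem hy]
    exact le_of_eq (tent_eq_zero' p hy)

lemma integral_tent_le {p : X} {ρ : ℝ} (hρ : 0 ≤ ρ) (hfin : ν (ball p ρ) ≠ ⊤) :
    ∫ y, tent p ρ y ∂ν ≤ ρ * (ν (ball p ρ)).toReal := by
  rw [← setIntegral_eq_integral_of_forall_compl_eq_zero
    (fun y hy => tent_eq_zero' p hy)]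
  calc ∫ y in ball p ρ, tent p ρ y ∂ν ≤ ‖∫ y in ball p ρ, tent p ρ y ∂ν‖ := by
        rw [Real.norm_eq_abs]; exact le_abs_self _
    _ ≤ ρ * (ν (ball p ρ)).toReal := by
        refine norm_setIntegral_le_of_norm_le_const hfin.lt_top fun y _ => ?_
        rw [Real.norm_eq_abs, abs_of_nonneg (tent_nonneg _ _ _)]
        exact tent_le p hρ y

lemma le_integral_tent {p : X} {ρ : ℝ} (hρ : 0 ≤ ρ) (hfin : ν (ball p ρ) ≠ ⊤) :
    ρ / 2 * (ν (ball p (ρ / 2))).toReal ≤ ∫ y, tent p ρ y ∂ν := by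
  have hint := tent_integrable ν hρ hfin
  have hsub : ball p (ρ / 2) ⊆ ball p ρ := ball_subset_ball (by linarith)
  have h1 : ρ / 2 * (ν (ball p (ρ / 2))).toReal ≤ ∫ y in ball p (ρ / 2), tent p ρ y ∂ν := by
    refine setIntegral_ge_of_const_le_real measurableSet_ball
      (fun h => hfin (top_le_iff.mp (h ▸ measure_mono hsub))) (fun y hy => tent_half p hy.out.le)
      hint.integrableOn
  exact h1.trans (setIntegral_le_integral hint
    (Filter.Eventually.of_forall fun y => tent_nonneg _ _ _))

/-- coordinates are dominated by the distance -/
lemma coord_le_dist {n : ℕ} (x y : EuclideanSpace ℝ (Fin n)) (i : Fin n) :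
    |x i - y i| ≤ dist x y := by
  rw [EuclideanSpace.dist_eq]
  have h1 : |x i - y i| = √(dist (x i) (y i) ^ 2) := by
    rw [Real.sqrt_sq_eq_abs, Real.dist_eq, abs_abs]
  rw [h1]
  refine Real.sqrt_le_sqrt ?_
  exact Finset.single_le_sum (f := fun j => dist (x j) (y j) ^ 2)
    (fun j _ => sq_nonneg _) (Finset.mem_univ i)

lemma dist_le_of_coord_le {n : ℕ} {x y : EuclideanSpace ℝ (Fin n)} {M : ℝ} (hM : 0 ≤ M)
    (h : ∀ i, |x i - y i| ≤ M) : dist x y ≤ Real.sqrt n * M := by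
  rw [EuclideanSpace.dist_eq]
  have : ∑ i, dist (x i) (y i) ^ 2 ≤ n * M ^ 2 := by
    calc ∑ i, dist (x i) (y i) ^ 2 ≤ ∑ _i : Fin n, M ^ 2 := by
          refine Finset.sum_le_sum fun i _ => ?_
          rw [Real.dist_eq]
          exact pow_le_pow_left₀ (abs_nonneg _) (h i) 2
      _ = n * M ^ 2 := by simp [mul_comm]
  calc √(∑ i, dist (x i) (y i) ^ 2) ≤ √((n : ℝ) * M ^ 2) := Real.sqrt_le_sqrt this
    _ = √(n : ℝ) * M := by
        rw [Real.sqrt_mul (Nat.cast_nonneg n), Real.sqrt_sq hM]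

end Tent

/-- Lower bound for Hausdorff measure of euclidean balls. -/
lemma euc_ball_lower (d : ℕ) (hd : 0 < d) {ρ : ℝ} (hρ : 0 < ρ) :
    ENNReal.ofReal ((2 * ρ / d) ^ d) ≤ μH[(d : ℝ)] (ball (0 : EuclideanSpace ℝ (Fin d)) ρ) := by
  set e := WithLp.equiv 2 (Fin d → ℝ)
  have hd1 : (1 : ℝ) ≤ d := by exact_mod_cast hd
  have hdpos : (0 : ℝ) < d := by positivity
  have hle : μH[(d : ℝ)] (e '' ball 0 ρ) ≤ (1 : ℝ≥0) ^ (d : ℝ) *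
      μH[(d : ℝ)] (ball (0 : EuclideanSpace ℝ (Fin d)) ρ) :=
    (PiLp.lipschitzWith_ofLp 2 _).hausdorffMeasure_image_le (by positivity) _
  -- the key antilipschitz estimate
  have hanti : ∀ x : Fin d → ℝ, dist (e.symm x) (0 : EuclideanSpace ℝ (Fin d)) ≤
      (d : ℝ) * dist x 0 := by
    intro x
    have h2 := (PiLp.antilipschitzWith_ofLp 2 (fun _ : Fin d => ℝ)).le_mul_dist (e.symm x) 0
    have he0 : e (0 : EuclideanSpace ℝ (Fin d)) = 0 := rfl
    have hex : e (e.symm x) = x := Equiv.apply_symm_apply _ _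
    change _ ≤ _ * dist (e (e.symm x)) (e 0) at h2
    rw [hex, he0] at h2
    refine h2.trans ?_
    have hK : ((Fintype.card (Fin d) : ℝ≥0) ^ (1 / (2:ℝ≥0∞)).toReal : ℝ) ≤ (d : ℝ) := by
      simp only [Fintype.card_fin, NNReal.coe_rpow, NNReal.coe_natCast]
      have h12 : ((1 : ℝ≥0∞) / 2).toReal = (1:ℝ)/2 := by norm_num
      rw [h12]
      calc (d : ℝ) ^ ((1:ℝ)/2) ≤ (d : ℝ) ^ (1:ℝ) :=
            Real.rpow_le_rpow_of_exponent_le hd1 (by norm_num)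
        _ = d := Real.rpow_one _
    exact mul_le_mul_of_nonneg_right hK dist_nonneg
  have hsub : ball (0 : Fin d → ℝ) (ρ / d) ⊆ e '' ball 0 ρ := by
    intro x hx
    refine ⟨e.symm x, ?_, Equiv.apply_symm_apply _ _⟩
    rw [mem_ball] at hx ⊢
    have := hanti x
    have hx0 : dist x (0 : Fin d → ℝ) < ρ / d := by simpa using hx
    calc dist (e.symm x) 0 ≤ (d : ℝ) * dist x 0 := hanti x
      _ < (d : ℝ) * (ρ / d) := by
          exact mul_lt_mul_of_pos_left hx0 hdpos
      _ = ρ := by field_simp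
  have hpi : μH[(d : ℝ)] (ball (0 : Fin d → ℝ) (ρ / d)) =
      ENNReal.ofReal ((2 * ρ / d) ^ d) := by
    have : (μH[(d : ℝ)] : Measure (Fin d → ℝ)) = volume := by
      have := hausdorffMeasure_pi_real (ι := Fin d)
      simpa [Fintype.card_fin] using this
    rw [this, Real.volume_pi_ball _ (by positivity)]
    congr 1
    rw [Fintype.card_fin]
    ring_nf
  calc ENNReal.ofReal ((2 * ρ / d) ^ d) = μH[(d : ℝ)] (ball (0 : Fin d → ℝ) (ρ / d)) := hpi.symm
    _ ≤ μH[(d : ℝ)] (e '' ball 0 ρ) := measure_mono hsub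
    _ ≤ (1 : ℝ≥0) ^ (d : ℝ) * μH[(d : ℝ)] (ball (0 : EuclideanSpace ℝ (Fin d)) ρ) := hle
    _ = μH[(d : ℝ)] (ball (0 : EuclideanSpace ℝ (Fin d)) ρ) := by
        rw [ENNReal.coe_one, ENNReal.one_rpow, one_mul]

/-- Upper bound for Hausdorff measure of euclidean closed balls. -/
lemma euc_ball_upper (d : ℕ) (hd : 0 < d) {ρ : ℝ} (hρ : 0 ≤ ρ) :
    μH[(d : ℝ)] (closedBall (0 : EuclideanSpace ℝ (Fin d)) ρ) ≤
      ENNReal.ofReal ((2 * d * ρ) ^ d) := by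
  set e := WithLp.equiv 2 (Fin d → ℝ)
  have hd1 : (1 : ℝ≥0) ≤ (d : ℝ≥0) := by exact_mod_cast hd
  -- e.symm is Lipschitz with constant d
  have hanti := PiLp.antilipschitzWith_ofLp 2 (fun _ : Fin d => ℝ)
  have hsymm : LipschitzWith (d : ℝ≥0) (e.symm) := by
    have h1 : LipschitzWith ((Fintype.card (Fin d) : ℝ≥0) ^ (1 / (2:ℝ≥0∞)).toReal) e.symm :=
      hanti.to_rightInverse (Equiv.apply_symm_apply e)
    refine h1.weaken ?_
    simp only [Fintype.card_fin]
    have h2 : ((1 : ℝ≥0∞) / 2).toReal = (1:ℝ)/2 := by norm_num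
    rw [h2]
    calc (d : ℝ≥0) ^ ((1:ℝ)/2) ≤ (d : ℝ≥0) ^ (1:ℝ) :=
          NNReal.rpow_le_rpow_of_exponent_le hd1 (by norm_num)
      _ = d := NNReal.rpow_one _
  have him : closedBall (0 : EuclideanSpace ℝ (Fin d)) ρ =
      e.symm '' (e '' closedBall 0 ρ) := by
    rw [Set.image_image]; simp
  have hsub : e '' closedBall (0 : EuclideanSpace ℝ (Fin d)) ρ ⊆
      closedBall (0 : Fin d → ℝ) ρ := by
    rintro _ ⟨y, hy, rfl⟩
    rw [mem_closedBall] at hy ⊢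
    have := (PiLp.lipschitzWith_ofLp 2 (fun _ : Fin d => ℝ)).dist_le_mul y 0
    calc dist (e y) 0 ≤ 1 * dist y 0 := by rw [NNReal.coe_one] at this; exact this
      _ = dist y 0 := one_mul _
      _ ≤ ρ := hy
  have hpi : (μH[(d : ℝ)] : Measure (Fin d → ℝ)) = volume := by
    have := hausdorffMeasure_pi_real (ι := Fin d)
    simpa [Fintype.card_fin] using this
  calc μH[(d : ℝ)] (closedBall (0 : EuclideanSpace ℝ (Fin d)) ρ)
      = μH[(d : ℝ)] (e.symm '' (e '' closedBall 0 ρ)) := by rw [← him]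
    _ ≤ ((d : ℝ≥0) : ℝ≥0∞) ^ (d : ℝ) * μH[(d : ℝ)] (e '' closedBall 0 ρ) :=
        hsymm.hausdorffMeasure_image_le (by positivity) _
    _ ≤ ((d : ℝ≥0) : ℝ≥0∞) ^ (d : ℝ) * μH[(d : ℝ)] (closedBall (0 : Fin d → ℝ) ρ) := by
        exact mul_le_mul_right (measure_mono hsub) _
    _ = ((d : ℝ≥0) : ℝ≥0∞) ^ (d : ℝ) * ENNReal.ofReal ((2 * ρ) ^ d) := by
        rw [hpi, Real.volume_pi_closedBall _ hρ, Fintype.card_fin]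
    _ ≤ ENNReal.ofReal ((2 * d * ρ) ^ d) := by
        rw [ENNReal.rpow_natCast]
        have h3 : ((d : ℝ≥0) : ℝ≥0∞) ^ d = ENNReal.ofReal ((d:ℝ) ^ d) := by
          rw [ENNReal.ofReal_pow (by positivity)]
          congr 1
          simp [ENNReal.ofReal_natCast]
        rw [h3, ← ENNReal.ofReal_mul (by positivity)]
        refine ENNReal.ofReal_le_ofReal (le_of_eq ?_)
        rw [← mul_pow]
        ring_nf

lemma plane_map_exists {n : ℕ} (P : AffineSubspace ℝ (EuclideanSpace ℝ (Fin n)))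
    {q : EuclideanSpace ℝ (Fin n)} (hq : q ∈ P) :
    ∃ φ : EuclideanSpace ℝ (Fin (finrank ℝ P.direction)) → EuclideanSpace ℝ (Fin n),
      Isometry φ ∧ (∀ ρ : ℝ, φ '' ball 0 ρ = (P : Set _) ∩ ball q ρ) ∧
      (∀ ρ : ℝ, φ '' closedBall 0 ρ = (P : Set _) ∩ closedBall q ρ) := by
  set V := P.direction with hV
  let b := stdOrthonormalBasis ℝ V
  set φ : EuclideanSpace ℝ (Fin (finrank ℝ V)) → EuclideanSpace ℝ (Fin n) :=
    fun x => q + ((b.repr.symm x : V) : EuclideanSpace ℝ (Fin n)) with hφ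
  have hdist : ∀ x, dist (φ x) q = ‖x‖ := by
    intro x
    have h0 : dist (φ x) q = dist (q + ((b.repr.symm x : V) : EuclideanSpace ℝ (Fin n))) (q + 0) := by
      rw [add_zero]
    rw [h0, dist_add_left, dist_zero_right]
    have h1 : ‖((b.repr.symm x : V) : EuclideanSpace ℝ (Fin n))‖ = ‖b.repr.symm x‖ := rfl
    rw [h1, b.repr.symm.norm_map]
  have hmem : ∀ x, φ x ∈ P := by
    intro x
    have := AffineSubspace.vadd_mem_of_mem_direction (s := P) (b.repr.symm x).2 hq
    simpa [hφ, vadd_eq_add, add_comm] using this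
  have hsurj : ∀ p ∈ P, ∃ x, φ x = p ∧ ‖x‖ = dist p q := by
    intro p hp
    have hv : p - q ∈ V := by
      have := AffineSubspace.vsub_mem_direction hp hq
      simpa [vsub_eq_sub] using this
    refine ⟨b.repr ⟨p - q, hv⟩, ?_, ?_⟩
    · simp only [hφ, LinearIsometryEquiv.symm_apply_apply]
      abel
    · rw [b.repr.norm_map]
      have : ‖(⟨p - q, hv⟩ : V)‖ = ‖p - q‖ := rfl
      rw [this, dist_eq_norm]
  refine ⟨φ, ?_, ?_, ?_⟩
  · refine Isometry.of_dist_eq fun x y => ?_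
    rw [hφ]
    simp only
    rw [dist_add_left]
    have h1 : dist ((b.repr.symm x : V) : EuclideanSpace ℝ (Fin n))
        ((b.repr.symm y : V) : EuclideanSpace ℝ (Fin n)) = dist (b.repr.symm x) (b.repr.symm y) :=
      (Subtype.dist_eq _ _).symm
    rw [h1, b.repr.symm.dist_map]
  · intro ρ
    ext p
    constructor
    · rintro ⟨x, hx, rfl⟩
      refine ⟨hmem x, ?_⟩
      rw [mem_ball, hdist]
      simpa [mem_ball, dist_zero_right] using hx
    · rintro ⟨hp, hpq⟩
      obtain ⟨x, rfl, hnorm⟩ := hsurj p hp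
      refine ⟨x, ?_, rfl⟩
      rw [mem_ball, dist_zero_right, hnorm]
      exact mem_ball.mp hpq
  · intro ρ
    ext p
    constructor
    · rintro ⟨x, hx, rfl⟩
      refine ⟨hmem x, ?_⟩
      rw [mem_closedBall, hdist]
      simpa [mem_closedBall, dist_zero_right] using hx
    · rintro ⟨hp, hpq⟩
      obtain ⟨x, rfl, hnorm⟩ := hsurj p hp
      refine ⟨x, ?_, rfl⟩
      rw [mem_closedBall, dist_zero_right, hnorm]
      exact mem_closedBall.mp hpq

lemma plane_ball_lower {n d : ℕ} (hd : 0 < d) (P : AffineSubspace ℝ (EuclideanSpace ℝ (Fin n)))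
    (hP : finrank ℝ P.direction = d) {q : EuclideanSpace ℝ (Fin n)} (hq : q ∈ P)
    {ρ : ℝ} (hρ : 0 < ρ) :
    ENNReal.ofReal ((2 * ρ / d) ^ d) ≤ μH[(d : ℝ)] ((P : Set _) ∩ ball q ρ) := by
  subst hP
  obtain ⟨φ, hiso, hball, -⟩ := plane_map_exists P hq
  rw [← hball ρ, hiso.hausdorffMeasure_image (Or.inl (by positivity))]
  exact euc_ball_lower _ hd hρ

lemma plane_ball_upper {n d : ℕ} (hd : 0 < d) (P : AffineSubspace ℝ (EuclideanSpace ℝ (Fin n)))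
    (hP : finrank ℝ P.direction = d) {q : EuclideanSpace ℝ (Fin n)} (hq : q ∈ P)
    {ρ : ℝ} (hρ : 0 ≤ ρ) :
    μH[(d : ℝ)] ((P : Set _) ∩ closedBall q ρ) ≤ ENNReal.ofReal ((2 * d * ρ) ^ d) := by
  subst hP
  obtain ⟨φ, hiso, -, hball⟩ := plane_map_exists P hq
  rw [← hball ρ, hiso.hausdorffMeasure_image (Or.inl (by positivity))]
  exact euc_ball_upper _ hd hρ

lemma plane_closedBall_ne_top {n d : ℕ} (hd : 0 < d) (P : AffineSubspace ℝ (EuclideanSpace ℝ (Fin n)))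
    (hP : finrank ℝ P.direction = d) (x : EuclideanSpace ℝ (Fin n)) {ρ : ℝ} (hρ : 0 ≤ ρ) :
    μH[(d : ℝ)] ((P : Set _) ∩ closedBall x ρ) ≠ ⊤ := by
  by_cases hne : ((P : Set _) ∩ closedBall x ρ).Nonempty
  · obtain ⟨q, hqP, hqx⟩ := hne
    have hsub : (P : Set _) ∩ closedBall x ρ ⊆ (P : Set _) ∩ closedBall q (2 * ρ) := by
      rintro y ⟨hyP, hyx⟩
      refine ⟨hyP, ?_⟩
      rw [mem_closedBall] at *
      calc dist y q ≤ dist y x + dist x q := dist_triangle _ _ _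
        _ ≤ ρ + ρ := add_le_add hyx (by rwa [dist_comm] at hqx)
        _ = 2 * ρ := by ring
    refine ne_top_of_le_ne_top ?_ (measure_mono hsub)
    exact (lt_of_le_of_lt (plane_ball_upper hd P hP hqP (by linarith)) ENNReal.ofReal_lt_top).ne
  · rw [not_nonempty_iff_eq_empty] at hne
    rw [hne]
    simp

lemma LipIn.abs_le {E : Type*} [NormedAddCommGroup E] [NormedSpace ℝ E] [Nontrivial E]
    {x : E} {r : ℝ} (hr : 0 < r) {g : E → ℝ} (hg : g ∈ LipIn x r) (y : E) :
    |g y| ≤ 2 * r + 1 := by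
  obtain ⟨v, hv⟩ := exists_ne (0 : E)
  set w := x + ((r + 1) / ‖v‖) • v with hw
  have hvn : (0 : ℝ) < ‖v‖ := norm_pos_iff.mpr hv
  have hdw : dist w x = r + 1 := by
    rw [dist_eq_norm, hw, add_sub_cancel_left, norm_smul, Real.norm_eq_abs,
      abs_of_nonneg (by positivity), div_mul_cancel₀ _ hvn.ne']
  have hgw : g w = 0 := hg.2 w (by rw [mem_closedBall, hdw]; linarith)
  by_cases hy : y ∈ closedBall x r
  · have h1 := hg.1.dist_le_mul y w
    rw [Real.dist_eq, hgw, sub_zero, NNReal.coe_one, one_mul] at h1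
    refine h1.trans ?_
    calc dist y w ≤ dist y x + dist x w := dist_triangle _ _ _
      _ ≤ r + (r + 1) := add_le_add (mem_closedBall.mp hy) (by rw [dist_comm]; exact hdw.le)
      _ = 2 * r + 1 := by ring
  · rw [hg.2 y hy, abs_zero]; positivity

lemma LipIn.abs_integral_le {E : Type*} [NormedAddCommGroup E] [NormedSpace ℝ E] [Nontrivial E]
    [MeasurableSpace E] [OpensMeasurableSpace E]
    {x : E} {r : ℝ} (hr : 0 < r) {g : E → ℝ} (hg : g ∈ LipIn x r) (κ : Measure E)
    (hκ : κ (closedBall x r) ≠ ⊤) :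
    |∫ y, g y ∂κ| ≤ (2 * r + 1) * (κ (closedBall x r)).toReal := by
  rw [← setIntegral_eq_integral_of_forall_compl_eq_zero (fun y hy => hg.2 y hy),
    ← Real.norm_eq_abs]
  exact norm_setIntegral_le_of_norm_le_const hκ.lt_top
    (fun y _ => by rw [Real.norm_eq_abs]; exact LipIn.abs_le hr hg y)

lemma abs_integral_sub_le_wdist {E : Type*} [NormedAddCommGroup E] [NormedSpace ℝ E]
    [Nontrivial E] [MeasurableSpace E] [OpensMeasurableSpace E] (d : ℕ) {x : E} {r : ℝ}
    (hr : 0 < r) {μ ν : Measure E} (hμ : μ (closedBall x r) ≠ ⊤) (hν : ν (closedBall x r) ≠ ⊤)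
    {f : E → ℝ} (hf : f ∈ LipIn x r) :
    |∫ y, f y ∂μ - ∫ y, f y ∂ν| ≤ r ^ (d + 1) * wdist d x r μ ν := by
  have hbdd : BddAbove (Set.range fun g : LipIn x r => |∫ y, g.1 y ∂μ - ∫ y, g.1 y ∂ν|) := by
    refine ⟨(2 * r + 1) * (μ (closedBall x r)).toReal +
      (2 * r + 1) * (ν (closedBall x r)).toReal, ?_⟩
    rintro _ ⟨g, rfl⟩
    calc |∫ y, g.1 y ∂μ - ∫ y, g.1 y ∂ν| ≤ |∫ y, g.1 y ∂μ| + |∫ y, g.1 y ∂ν| := abs_sub _ _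
      _ ≤ _ := add_le_add (LipIn.abs_integral_le hr g.2 μ hμ) (LipIn.abs_integral_le hr g.2 ν hν)
  have hle : |∫ y, f y ∂μ - ∫ y, f y ∂ν| ≤
      ⨆ g : LipIn x r, |∫ y, g.1 y ∂μ - ∫ y, g.1 y ∂ν| :=
    le_ciSup hbdd (⟨f, hf⟩ : LipIn x r)
  have h1 : r ^ (-(d : ℝ) - 1) = (r ^ (d + 1) : ℝ)⁻¹ := by
    rw [show -(d : ℝ) - 1 = -((d : ℝ) + 1) by ring, Real.rpow_neg hr.le]
    congr 1
    rw [show ((d : ℝ) + 1) = ((d + 1 : ℕ) : ℝ) by push_cast; ring, Real.rpow_natCast]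
  rw [wdist, h1, ← mul_assoc, mul_inv_cancel₀ (pow_ne_zero _ hr.ne'), one_mul]
  exact hle

end Helpers

set_option maxHeartbeats 2000000 in
/-- For a Whitney cube `Q` (with `20Q ⊂ Ω`, `ξ_Q ∈ 60Q ∩ Γ`,
`ℓ(Q) = diam Q = s√n`) and a flat measure `μ_Q = c_Q μ_{P_Q}` with
`dist_Q(μ_Q,σ) ≤ 2α_Q`, there is `ε > 0` depending only on `C_σ`, `d`, `n` such that
`α_Q ≤ ε` implies `dist(ξ_Q,P_Q) ≤ 5ℓ(Q)`, `dist(2Q,P_Q) ≥ 5ℓ(Q)/√n`, and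
`ε ≤ c_Q ≤ 1/ε`. -/
theorem stmt11 (n d : ℕ) (hd : 0 < d) (hdn : d < n) (Cσ : ℝ) (hCσ : 1 ≤ Cσ) :
    ∃ ε > 0, ∀ (Γ : Set (EuclideanSpace ℝ (Fin n))), IsClosed Γ →
      ∀ (σ : Measure (EuclideanSpace ℝ (Fin n))), σ.restrict Γ = σ →
      AhlforsRegular σ Γ d Cσ →
      ∀ (z : EuclideanSpace ℝ (Fin n)) (s : ℝ), 0 < s →
      cubeDilate n z s 20 ⊆ Γᶜ →
      ∀ ξQ ∈ cubeDilate n z s 60 ∩ Γ,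
      ∀ (cQ : ℝ) (PQ : AffineSubspace ℝ (EuclideanSpace ℝ (Fin n)))
        (μQ : Measure (EuclideanSpace ℝ (Fin n))),
        0 < cQ → (PQ : Set (EuclideanSpace ℝ (Fin n))).Nonempty →
        Module.finrank ℝ PQ.direction = d →
        μQ = ENNReal.ofReal cQ •
          (μH[(d : ℝ)]).restrict (PQ : Set (EuclideanSpace ℝ (Fin n))) →
        wdist d ξQ (2 ^ 10 * (s * Real.sqrt n)) μQ σ
          ≤ 2 * alphaNum d σ ξQ (2 ^ 10 * (s * Real.sqrt n)) →
        alphaNum d σ ξQ (2 ^ 10 * (s * Real.sqrt n)) ≤ ε →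
        infDist ξQ (PQ : Set (EuclideanSpace ℝ (Fin n))) ≤ 5 * (s * Real.sqrt n) ∧
        (∀ X ∈ cubeDilate n z s 2, ∀ p ∈ (PQ : Set (EuclideanSpace ℝ (Fin n))),
          5 * (s * Real.sqrt n) / Real.sqrt n ≤ dist X p) ∧
        ε ≤ cQ ∧ cQ ≤ 1 / ε := by
  classical
  have hCσ0 : (0:ℝ) < Cσ := lt_of_lt_of_le one_pos hCσ
  have hCσi : (0:ℝ) < Cσ⁻¹ := inv_pos.mpr hCσ0
  have hd0 : (0:ℝ) < d := by exact_mod_cast hd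
  have hn0 : 0 < n := lt_trans hd hdn
  have hN0 : (0:ℝ) < Real.sqrt n := Real.sqrt_pos.mpr (by exact_mod_cast hn0)
  have hN1 : (1:ℝ) ≤ Real.sqrt n := by
    rw [show (1:ℝ) = Real.sqrt 1 by simp]
    exact Real.sqrt_le_sqrt (by exact_mod_cast hn0)
  -- the constants
  set B2 : ℝ := ((2:ℝ)^10)^(d+1) with hB2def
  have hB20 : 0 < B2 := pow_pos (by norm_num) _
  set εA : ℝ := Cσ⁻¹ * (5/2)^(d+1) / (4 * B2) with hεAdef
  have hεA0 : 0 < εA := div_pos (mul_pos hCσi (pow_pos (by norm_num) _)) (by linarith)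
  set εKp : ℝ := Cσ⁻¹ * (1/2)^(d+1) / 4 with hεKdef
  have hεK0 : 0 < εKp := div_pos (mul_pos hCσi (pow_pos (by norm_num) _)) (by norm_num)
  set κ : ℝ := (Cσ⁻¹ * (1/2)^(d+1) / 2) / (4*d)^d with hκdef
  have hκ0 : 0 < κ := div_pos (div_pos (mul_pos hCσi (pow_pos (by norm_num) _)) (by norm_num))
    (pow_pos (by linarith) _)
  set K : ℝ := 2 * d^d * (Cσ * 7^d + 2 * B2) with hKdef
  have hK0 : 0 < K := by
    have h1 : (0:ℝ) < d^d := pow_pos hd0 _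
    have h2 : (0:ℝ) < Cσ * 7^d := mul_pos hCσ0 (pow_pos (by norm_num) _)
    exact mul_pos (mul_pos (by norm_num) h1) (add_pos h2 (by linarith))
  set NB : ℝ := ((2:ℝ)^10 * Real.sqrt n)^(d+1) with hNBdef
  have hNB0 : 0 < NB := pow_pos (by positivity) _
  set εB : ℝ := κ * (4/d)^d / (4 * NB) with hεBdef
  have hεB0 : 0 < εB := div_pos (mul_pos hκ0 (pow_pos (by positivity) _)) (by linarith)
  set ε : ℝ := min (min 1 (min εA εKp)) (min κ (min (1/K) εB)) with hεdef
  have hε0 : 0 < ε := lt_min (lt_min one_pos (lt_min hεA0 hεK0))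
    (lt_min hκ0 (lt_min (by positivity) hεB0))
  have hεle1 : ε ≤ 1 := le_trans (min_le_left _ _) (min_le_left _ _)
  have hεleA : ε ≤ εA := le_trans (min_le_left _ _) (le_trans (min_le_right _ _) (min_le_left _ _))
  have hεleK : ε ≤ εKp := le_trans (min_le_left _ _) (le_trans (min_le_right _ _) (min_le_right _ _))
  have hεleκ : ε ≤ κ := le_trans (min_le_right _ _) (min_le_left _ _)
  have hεleinvK : ε ≤ 1/K := le_trans (min_le_right _ _)
    (le_trans (min_le_right _ _) (min_le_left _ _))
  have hεleB : ε ≤ εB := le_trans (min_le_right _ _)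
    (le_trans (min_le_right _ _) (min_le_right _ _))
  refine ⟨ε, hε0, ?_⟩
  intro Γ hΓ σ hσr hAhl z s hs h20 ξQ hξQ cQ PQ μQ hcQ hPne hrank hμQ hwd hα
  haveI : Nontrivial (EuclideanSpace ℝ (Fin n)) := by
    refine nontrivial_of_ne (EuclideanSpace.single (⟨0, hn0⟩ : Fin n) (1:ℝ)) 0 ?_
    intro h
    have h1 : ‖EuclideanSpace.single (⟨0, hn0⟩ : Fin n) (1:ℝ)‖ = 1 := by
      rw [EuclideanSpace.norm_single]; norm_num
    rw [h, norm_zero] at h1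
    norm_num at h1
  set ℓ : ℝ := s * Real.sqrt n with hℓdef
  have hℓ0 : 0 < ℓ := mul_pos hs hN0
  have hsℓ : s ≤ ℓ := le_mul_of_one_le_right hs.le hN1
  set r : ℝ := 2^10 * ℓ with hrdef
  have hr0 : 0 < r := by positivity
  have hℓr : 40 * ℓ ≤ r := by
    rw [hrdef]
    have : (40:ℝ) ≤ 2^10 := by norm_num
    exact mul_le_mul_of_nonneg_right this hℓ0.le
  have hξΓ : ξQ ∈ Γ := hξQ.2
  have hξ60 : ∀ i, |ξQ i - z i| ≤ 30 * s := by
    intro i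
    have := hξQ.1 i
    linarith
  -- Ahlfors regularity at ξQ
  have hup : ∀ ρ : ℝ, 0 < ρ → σ (ball ξQ ρ) ≤ ENNReal.ofReal (Cσ * ρ ^ d) := by
    intro ρ hρ
    have := (hAhl ξQ hξΓ ρ hρ).2
    rwa [Real.rpow_natCast] at this
  have hlo : ∀ ρ : ℝ, 0 < ρ → ENNReal.ofReal (Cσ⁻¹ * ρ ^ d) ≤ σ (ball ξQ ρ) := by
    intro ρ hρ
    have := (hAhl ξQ hξΓ ρ hρ).1
    rwa [Real.rpow_natCast] at this
  have hσbig : σ (ball ξQ (2*r)) ≠ ⊤ :=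
    (lt_of_le_of_lt (hup (2*r) (by linarith)) ENNReal.ofReal_lt_top).ne
  have hσfin : ∀ p : EuclideanSpace ℝ (Fin n), ∀ t : ℝ, t + dist p ξQ ≤ 2*r →
      σ (ball p t) ≠ ⊤ := by
    intro p t h
    exact ne_top_of_le_ne_top hσbig (measure_mono (ball_subset_ball' h))
  have hσcb : σ (closedBall ξQ r) ≠ ⊤ :=
    ne_top_of_le_ne_top hσbig (measure_mono (closedBall_subset_ball (by linarith)))
  have hσup' : ∀ ρ : ℝ, 0 < ρ → (σ (ball ξQ ρ)).toReal ≤ Cσ * ρ ^ d := by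
    intro ρ hρ
    exact ENNReal.toReal_le_of_le_ofReal (by positivity) (hup ρ hρ)
  have hσlo' : ∀ ρ : ℝ, 0 < ρ → ρ ≤ 2*r → Cσ⁻¹ * ρ ^ d ≤ (σ (ball ξQ ρ)).toReal := by
    intro ρ hρ hρr
    have hfin : σ (ball ξQ ρ) ≠ ⊤ :=
      ne_top_of_le_ne_top hσbig (measure_mono (ball_subset_ball (by linarith)))
    exact (ENNReal.ofReal_le_iff_le_toReal hfin).mp (hlo ρ hρ)
  -- the plane measure
  set ν : Measure (EuclideanSpace ℝ (Fin n)) :=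
    (μH[(d : ℝ)]).restrict (PQ : Set (EuclideanSpace ℝ (Fin n))) with hνdef
  have hint : ∀ g : EuclideanSpace ℝ (Fin n) → ℝ, ∫ y, g y ∂μQ = cQ * ∫ y, g y ∂ν := by
    intro g
    rw [hμQ, integral_smul_measure, ENNReal.toReal_ofReal hcQ.le, smul_eq_mul]
  have hνball : ∀ (p : EuclideanSpace ℝ (Fin n)) (t : ℝ),
      ν (ball p t) = μH[(d : ℝ)] ((PQ : Set _) ∩ ball p t) := by
    intro p t
    rw [hνdef, Measure.restrict_apply measurableSet_ball, inter_comm]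
  have hPfin : ∀ (x : EuclideanSpace ℝ (Fin n)) (ρ : ℝ), 0 ≤ ρ →
      μH[(d : ℝ)] ((PQ : Set _) ∩ closedBall x ρ) ≠ ⊤ :=
    fun x ρ hρ => plane_closedBall_ne_top hd PQ hrank x hρ
  have hνfin : ∀ (p : EuclideanSpace ℝ (Fin n)) (t : ℝ), 0 ≤ t → ν (ball p t) ≠ ⊤ := by
    intro p t ht
    rw [hνball]
    exact ne_top_of_le_ne_top (hPfin p t ht)
      (measure_mono (inter_subset_inter_right _ ball_subset_closedBall))
  have hμcb : μQ (closedBall ξQ r) ≠ ⊤ := by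
    rw [hμQ, Measure.smul_apply, smul_eq_mul]
    refine ENNReal.mul_ne_top ENNReal.ofReal_ne_top ?_
    rw [Measure.restrict_apply measurableSet_closedBall, inter_comm]
    exact hPfin ξQ r hr0.le
  -- key estimate for tent functions
  have hLip : ∀ (p : EuclideanSpace ℝ (Fin n)) (ρ : ℝ), 0 < ρ → dist p ξQ + ρ ≤ r →
      tent p ρ ∈ LipIn ξQ r := by
    intro p ρ hρ h
    refine ⟨tent_lipschitz p ρ, fun y hy => tent_eq_zero p ?_⟩
    rw [mem_closedBall, not_le] at hy
    have h1 : dist y ξQ ≤ dist y p + dist p ξQ := dist_triangle _ _ _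
    linarith
  have hkey : ∀ (p : EuclideanSpace ℝ (Fin n)) (ρ : ℝ), 0 < ρ → dist p ξQ + ρ ≤ r →
      |∫ y, tent p ρ y ∂μQ - ∫ y, tent p ρ y ∂σ| ≤ 2 * ε * r^(d+1) := by
    intro p ρ hρ hpr
    have h1 := abs_integral_sub_le_wdist d hr0 hμcb hσcb (hLip p ρ hρ hpr)
    have h2 : wdist d ξQ r μQ σ ≤ 2 * ε := le_trans hwd (by linarith)
    calc |∫ y, tent p ρ y ∂μQ - ∫ y, tent p ρ y ∂σ| ≤ r^(d+1) * wdist d ξQ r μQ σ := h1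
      _ ≤ r^(d+1) * (2*ε) := mul_le_mul_of_nonneg_left h2 (by positivity)
      _ = 2 * ε * r^(d+1) := by ring
  have hcancel : ∀ {a b L : ℝ}, 0 < L → a * L ≤ b * L → a ≤ b :=
    fun {a b L} hL h => le_of_mul_le_mul_right h hL
  have hL0 : 0 < ℓ^(d+1) := pow_pos hℓ0 _
  have hrL : r^(d+1) = B2 * ℓ^(d+1) := by rw [hrdef, mul_pow, hB2def]
  -- STEP A : infDist ξQ PQ ≤ 5ℓ
  have hA : infDist ξQ (PQ : Set (EuclideanSpace ℝ (Fin n))) ≤ 5 * ℓ := by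
    by_contra hcon
    push_neg at hcon
    have hball0 : ν (ball ξQ (5*ℓ)) = 0 := by
      rw [hνball]
      have hempty : (PQ : Set (EuclideanSpace ℝ (Fin n))) ∩ ball ξQ (5*ℓ) = ∅ := by
        rw [eq_empty_iff_forall_notMem]
        rintro y ⟨hyP, hyb⟩
        have h1 : infDist ξQ (PQ : Set (EuclideanSpace ℝ (Fin n))) ≤ dist ξQ y :=
          infDist_le_dist_of_mem hyP
        rw [mem_ball, dist_comm] at hyb
        linarith
      rw [hempty, measure_empty]
    have hz : ∫ y, tent ξQ (5*ℓ) y ∂μQ = 0 := by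
      rw [hint]
      have hub := integral_tent_le ν (by positivity : (0:ℝ) ≤ 5*ℓ)
        (by rw [hball0]; exact ENNReal.zero_ne_top)
      rw [hball0] at hub
      simp only [ENNReal.toReal_zero, mul_zero] at hub
      have hlb : 0 ≤ ∫ y, tent ξQ (5*ℓ) y ∂ν :=
        integral_nonneg fun y => tent_nonneg _ _ _
      have : ∫ y, tent ξQ (5*ℓ) y ∂ν = 0 := le_antisymm hub hlb
      rw [this, mul_zero]
    have hkey5 := hkey ξQ (5*ℓ) (by positivity) (by rw [dist_self]; linarith)
    rw [hz, zero_sub, abs_neg] at hkey5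
    have hσint : 5*ℓ/2 * (σ (ball ξQ (5*ℓ/2))).toReal ≤ ∫ y, tent ξQ (5*ℓ) y ∂σ :=
      le_integral_tent σ (by positivity) (hσfin ξQ (5*ℓ) (by rw [dist_self]; linarith))
    have hσv : Cσ⁻¹ * (5*ℓ/2) ^ d ≤ (σ (ball ξQ (5*ℓ/2))).toReal :=
      hσlo' (5*ℓ/2) (by positivity) (by linarith)
    have habs : ∫ y, tent ξQ (5*ℓ) y ∂σ ≤ |∫ y, tent ξQ (5*ℓ) y ∂σ| := le_abs_self _
    have hchain : Cσ⁻¹ * (5*ℓ/2)^(d+1) ≤ 2 * ε * r^(d+1) := by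
      have h1 : Cσ⁻¹ * (5*ℓ/2)^(d+1) = 5*ℓ/2 * (Cσ⁻¹ * (5*ℓ/2)^d) := by ring
      rw [h1]
      refine le_trans (mul_le_mul_of_nonneg_left hσv (by positivity)) ?_
      exact le_trans hσint (le_trans habs hkey5)
    -- crunch constants
    have h52 : (5*ℓ/2)^(d+1) = (5/2)^(d+1) * ℓ^(d+1) := by
      rw [← mul_pow]; ring_nf
    have hc : Cσ⁻¹ * (5/2)^(d+1) ≤ 2 * ε * B2 := by
      refine hcancel hL0 ?_
      calc (Cσ⁻¹ * (5/2)^(d+1)) * ℓ^(d+1) = Cσ⁻¹ * (5*ℓ/2)^(d+1) := by rw [h52]; ring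
        _ ≤ 2 * ε * r^(d+1) := hchain
        _ = (2 * ε * B2) * ℓ^(d+1) := by rw [hrL]; ring
    have hεAv : 2 * εA * B2 = Cσ⁻¹ * (5/2)^(d+1) / 2 := by
      rw [hεAdef]; field_simp; ring
    have h2 : 2 * ε * B2 ≤ 2 * εA * B2 :=
      mul_le_mul_of_nonneg_right (by linarith) hB20.le
    have hpos : 0 < Cσ⁻¹ * (5/2)^(d+1) := mul_pos hCσi (pow_pos (by norm_num) _)
    rw [hεAv] at h2
    linarith
  -- pick p₀ ∈ PQ close to ξQ
  obtain ⟨p₀, hp₀P, hp₀d⟩ : ∃ p ∈ (PQ : Set (EuclideanSpace ℝ (Fin n))), dist ξQ p < 6*ℓ :=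
    (infDist_lt_iff hPne).mp (lt_of_le_of_lt hA (by linarith))
  -- STEP C lower : κ ≤ cQ
  have hCl : κ ≤ cQ := by
    have hkeyr := hkey ξQ r hr0 (by rw [dist_self]; linarith)
    -- upper bound on the μQ integral
    have hν1 : (ν (ball ξQ r)).toReal ≤ (2*d*(2*r))^d := by
      have hsub : (PQ : Set _) ∩ ball ξQ r ⊆ (PQ : Set _) ∩ closedBall p₀ (2*r) := by
        rintro y ⟨hyP, hyb⟩
        refine ⟨hyP, ?_⟩
        rw [mem_closedBall]
        rw [mem_ball] at hyb
        have h1 : dist y p₀ ≤ dist y ξQ + dist ξQ p₀ := dist_triangle _ _ _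
        linarith
      have h2 : ν (ball ξQ r) ≤ ENNReal.ofReal ((2*d*(2*r))^d) := by
        rw [hνball]
        exact le_trans (measure_mono hsub) (plane_ball_upper hd PQ hrank hp₀P (by linarith))
      exact ENNReal.toReal_le_of_le_ofReal (by positivity) h2
    have hμint : ∫ y, tent ξQ r y ∂μQ ≤ cQ * (r * (2*d*(2*r))^d) := by
      rw [hint]
      refine mul_le_mul_of_nonneg_left ?_ hcQ.le
      refine le_trans (integral_tent_le ν hr0.le (hνfin ξQ r hr0.le)) ?_
      exact mul_le_mul_of_nonneg_left hν1 hr0.le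
    have hσint : r/2 * (σ (ball ξQ (r/2))).toReal ≤ ∫ y, tent ξQ r y ∂σ :=
      le_integral_tent σ hr0.le (hσfin ξQ r (by rw [dist_self]; linarith))
    have hσv : Cσ⁻¹ * (r/2)^d ≤ (σ (ball ξQ (r/2))).toReal :=
      hσlo' (r/2) (by positivity) (by linarith)
    have hd1 := (abs_le.mp hkeyr).1
    -- Cσ⁻¹ (r/2)^{d+1} ≤ cQ r (4dr)^d + 2ε r^{d+1}
    have hchain : Cσ⁻¹ * (r/2)^(d+1) ≤ cQ * (r * (2*d*(2*r))^d) + 2 * ε * r^(d+1) := by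
      have h1 : Cσ⁻¹ * (r/2)^(d+1) = r/2 * (Cσ⁻¹ * (r/2)^d) := by ring
      have h2 : r/2 * (Cσ⁻¹ * (r/2)^d) ≤ ∫ y, tent ξQ r y ∂σ :=
        le_trans (mul_le_mul_of_nonneg_left hσv (by positivity)) hσint
      linarith
    have hr2 : (r/2)^(d+1) = (1/2)^(d+1) * r^(d+1) := by rw [← mul_pow]; ring_nf
    have hrd : r * (2*d*(2*r))^d = (4*d)^d * r^(d+1) := by
      rw [show 2*(d:ℝ)*(2*r) = (4*d)*r by ring, mul_pow, pow_succ]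
      ring
    have hR0 : 0 < r^(d+1) := pow_pos hr0 _
    have hc : Cσ⁻¹ * (1/2)^(d+1) ≤ cQ * (4*d)^d + 2 * ε := by
      refine hcancel hR0 ?_
      calc (Cσ⁻¹ * (1/2)^(d+1)) * r^(d+1) = Cσ⁻¹ * (r/2)^(d+1) := by rw [hr2]; ring
        _ ≤ cQ * (r * (2*d*(2*r))^d) + 2 * ε * r^(d+1) := hchain
        _ = (cQ * (4*d)^d + 2 * ε) * r^(d+1) := by rw [hrd]; ring
    have hεv : 2 * ε ≤ Cσ⁻¹ * (1/2)^(d+1) / 2 := by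
      rw [hεKdef] at hεleK; linarith
    have h4d : 0 < ((4:ℝ)*d)^d := pow_pos (by linarith) _
    rw [hκdef, div_le_iff₀ h4d]
    linarith
  -- STEP C upper : cQ ≤ K
  have hCu : cQ ≤ K := by
    have hkeyℓ := hkey p₀ ℓ hℓ0 (by rw [dist_comm]; linarith)
    -- lower bound on μQ integral
    have hνl : (ℓ/d)^d ≤ (ν (ball p₀ (ℓ/2))).toReal := by
      have h1 : ENNReal.ofReal ((2*(ℓ/2)/d)^d) ≤ ν (ball p₀ (ℓ/2)) := by
        rw [hνball]
        exact plane_ball_lower hd PQ hrank hp₀P (by positivity)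
      have h2 := (ENNReal.ofReal_le_iff_le_toReal (hνfin p₀ (ℓ/2) (by positivity))).mp h1
      rw [show 2*(ℓ/2)/(d:ℝ) = ℓ/d by ring] at h2
      exact h2
    have hμint : cQ * (ℓ/2 * (ℓ/d)^d) ≤ ∫ y, tent p₀ ℓ y ∂μQ := by
      rw [hint]
      refine mul_le_mul_of_nonneg_left ?_ hcQ.le
      refine le_trans ?_ (le_integral_tent ν hℓ0.le (hνfin p₀ ℓ hℓ0.le))
      exact mul_le_mul_of_nonneg_left hνl (by positivity)
    -- upper bound on σ integral
    have hσint : ∫ y, tent p₀ ℓ y ∂σ ≤ ℓ * (Cσ * (7*ℓ)^d) := by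
      refine le_trans (integral_tent_le σ hℓ0.le
        (hσfin p₀ ℓ (by rw [dist_comm]; linarith))) ?_
      refine mul_le_mul_of_nonneg_left ?_ hℓ0.le
      have hsub : ball p₀ ℓ ⊆ ball ξQ (7*ℓ) := ball_subset_ball' (by rw [dist_comm]; linarith)
      have hfin7 : σ (ball ξQ (7*ℓ)) ≠ ⊤ :=
        ne_top_of_le_ne_top hσbig (measure_mono (ball_subset_ball (by linarith)))
      calc (σ (ball p₀ ℓ)).toReal ≤ (σ (ball ξQ (7*ℓ))).toReal :=
            ENNReal.toReal_mono hfin7 (measure_mono hsub)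
        _ ≤ Cσ * (7*ℓ)^d := hσup' (7*ℓ) (by positivity)
    have hd1 := (abs_le.mp hkeyℓ).2
    have hchain : cQ * (ℓ/2 * (ℓ/d)^d) ≤ ℓ * (Cσ * (7*ℓ)^d) + 2 * ε * r^(d+1) := by
      linarith
    have h1 : ℓ/2 * (ℓ/d)^d = (1/2) * (1/d)^d * ℓ^(d+1) := by
      have hdne : (d:ℝ) ≠ 0 := ne_of_gt hd0
      rw [div_pow, div_pow, one_div, one_pow, pow_succ]
      field_simp
    have h2 : ℓ * (Cσ * (7*ℓ)^d) = Cσ * 7^d * ℓ^(d+1) := by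
      rw [mul_pow, pow_succ]; ring
    have hc : cQ * (1/2) * (1/d)^d ≤ Cσ * 7^d + 2 * ε * B2 := by
      refine hcancel hL0 ?_
      calc (cQ * (1/2) * (1/d)^d) * ℓ^(d+1) = cQ * (ℓ/2 * (ℓ/d)^d) := by rw [h1]; ring
        _ ≤ ℓ * (Cσ * (7*ℓ)^d) + 2 * ε * r^(d+1) := hchain
        _ = (Cσ * 7^d + 2 * ε * B2) * ℓ^(d+1) := by rw [h2, hrL]; ring
    have hεB2 : 2 * ε * B2 ≤ 2 * B2 := by
      have := mul_le_mul_of_nonneg_right (by linarith : 2 * ε ≤ 2) hB20.le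
      linarith
    have hdd : (1/(d:ℝ))^d * d^d = 1 := by
      rw [← mul_pow]
      rw [one_div, inv_mul_cancel₀ (ne_of_gt hd0), one_pow]
    have hdd0 : 0 < (1/(d:ℝ))^d := pow_pos (by positivity) _
    -- cQ ≤ 2 d^d (Cσ 7^d + 2 B2) = K
    rw [hKdef]
    have h3 : cQ * (1/2) * (1/d)^d ≤ Cσ * 7^d + 2 * B2 := by linarith
    have h4 := mul_le_mul_of_nonneg_right h3 (le_of_lt (pow_pos hd0 d) : (0:ℝ) ≤ d^d)
    rw [mul_assoc (cQ * (1/2)), hdd, mul_one] at h4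
    have h5 : cQ ≤ 2 * ((Cσ * 7^d + 2 * B2) * d^d) := by linarith
    calc cQ ≤ 2 * ((Cσ * 7^d + 2 * B2) * d^d) := h5
      _ = 2 * d^d * (Cσ * 7^d + 2 * B2) := by ring
  -- conclusion pieces
  have hεcQ : ε ≤ cQ := le_trans hεleκ hCl
  have hcQε : cQ ≤ 1 / ε := by
    have h1 : K ≤ 1 / ε := by
      rw [le_div_iff₀ hε0]
      have h2 : ε * K ≤ (1/K) * K := mul_le_mul_of_nonneg_right hεleinvK hK0.le
      rw [one_div, inv_mul_cancel₀ hK0.ne'] at h2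
      calc K * ε = ε * K := by ring
        _ ≤ 1 := h2
    exact hCu.trans h1
  refine ⟨hA, ?_, hεcQ, hcQε⟩
  -- STEP B : the plane is far from 2Q
  intro X hX p hp
  have hfix : 5 * (s * Real.sqrt n) / Real.sqrt n = 5 * s := by
    field_simp
  rw [hfix]
  by_contra hcon
  push_neg at hcon
  have hXz : ∀ i, |X i - z i| ≤ s := by
    intro i
    have := hX i
    linarith
  have hpX : dist p X < 5 * s := by rw [dist_comm]; exact hcon
  have hpz : ∀ i, |p i - z i| ≤ 6*s := by
    intro i
    have h1 := coord_le_dist p X i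
    have h2 := hXz i
    have h3 : |p i - z i| ≤ |p i - X i| + |X i - z i| := by
      have := abs_sub_abs_le_abs_sub (p i - z i) (p i - X i)
      calc |p i - z i| = |(p i - X i) + (X i - z i)| := by ring_nf
        _ ≤ |p i - X i| + |X i - z i| := abs_add_le _ _
    linarith
  have hpξ : dist p ξQ ≤ 36 * ℓ := by
    have h1 : ∀ i, |p i - ξQ i| ≤ 36 * s := by
      intro i
      have h2 := hpz i
      have h3 := hξ60 i
      calc |p i - ξQ i| = |(p i - z i) + (z i - ξQ i)| := by ring_nf
        _ ≤ |p i - z i| + |z i - ξQ i| := abs_add_le _ _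
        _ ≤ 6*s + 30*s := by
            have : |z i - ξQ i| = |ξQ i - z i| := abs_sub_comm _ _
            linarith [this ▸ h3]
        _ = 36 * s := by ring
    have := dist_le_of_coord_le (by positivity : (0:ℝ) ≤ 36*s) h1
    rw [hℓdef]
    calc dist p ξQ ≤ Real.sqrt n * (36 * s) := this
      _ = 36 * (s * Real.sqrt n) := by ring
  -- σ vanishes near p
  have hσ0 : σ (ball p (4*s)) = 0 := by
    conv_lhs => rw [← hσr]
    rw [Measure.restrict_apply measurableSet_ball]
    have hempty : ball p (4*s) ∩ Γ = ∅ := by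
      rw [eq_empty_iff_forall_notMem]
      rintro y ⟨hyb, hyΓ⟩
      refine h20 ?_ hyΓ
      intro i
      have h1 := coord_le_dist y p i
      have h2 := hpz i
      rw [mem_ball] at hyb
      have h3 : |y i - z i| ≤ |y i - p i| + |p i - z i| := by
        calc |y i - z i| = |(y i - p i) + (p i - z i)| := by ring_nf
          _ ≤ |y i - p i| + |p i - z i| := abs_add_le _ _
      have h4 : |y i - p i| ≤ dist y p := coord_le_dist y p i
      have : (20:ℝ) * s / 2 = 10 * s := by ring
      rw [this]
      linarith
    rw [hempty, measure_empty]
  have hσz : ∫ y, tent p (4*s) y ∂σ = 0 := by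
    have hub := integral_tent_le σ (by positivity : (0:ℝ) ≤ 4*s)
      (by rw [hσ0]; exact ENNReal.zero_ne_top)
    rw [hσ0] at hub
    simp only [ENNReal.toReal_zero, mul_zero] at hub
    exact le_antisymm hub (integral_nonneg fun y => tent_nonneg _ _ _)
  -- μQ integral is large
  have hνl : (4*s/d)^d ≤ (ν (ball p (2*s))).toReal := by
    have h1 : ENNReal.ofReal ((2*(2*s)/d)^d) ≤ ν (ball p (2*s)) := by
      rw [hνball]
      exact plane_ball_lower hd PQ hrank hp (by positivity)
    have h2 := (ENNReal.ofReal_le_iff_le_toReal (hνfin p (2*s) (by positivity))).mp h1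
    rw [show 2*(2*s)/(d:ℝ) = 4*s/d by ring] at h2
    exact h2
  have hμint : cQ * (2*s * (4*s/d)^d) ≤ ∫ y, tent p (4*s) y ∂μQ := by
    rw [hint]
    refine mul_le_mul_of_nonneg_left ?_ hcQ.le
    have h1 := le_integral_tent ν (by positivity : (0:ℝ) ≤ 4*s)
      (hνfin p (4*s) (by positivity))
    rw [show (4*s)/2 = 2*s by ring] at h1
    refine le_trans ?_ h1
    exact mul_le_mul_of_nonneg_left hνl (by positivity)
  have hkeyB := hkey p (4*s) (by positivity) (by linarith)
  rw [hσz, sub_zero] at hkeyB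
  have habs : ∫ y, tent p (4*s) y ∂μQ ≤ |∫ y, tent p (4*s) y ∂μQ| := le_abs_self _
  -- final contradiction
  have hchain : κ * (2*s * (4*s/d)^d) ≤ 2 * ε * r^(d+1) := by
    have h0 : 0 ≤ 2*s * (4*s/d)^d := by positivity
    have h1 : κ * (2*s * (4*s/d)^d) ≤ cQ * (2*s * (4*s/d)^d) :=
      mul_le_mul_of_nonneg_right hCl h0
    linarith
  have hS0 : 0 < s^(d+1) := pow_pos hs _
  have h1 : 2*s * (4*s/d)^d = 2 * (4/d)^d * s^(d+1) := by
    have hdne : (d:ℝ) ≠ 0 := ne_of_gt hd0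
    rw [div_pow, div_pow, mul_pow, pow_succ]
    field_simp
  have h2 : r^(d+1) = NB * s^(d+1) := by
    rw [hrdef, hℓdef, hNBdef, show (2:ℝ)^10 * (s * Real.sqrt n) = (2^10 * Real.sqrt n) * s by ring,
      mul_pow]
  have hc : κ * 2 * (4/d)^d ≤ 2 * ε * NB := by
    refine hcancel hS0 ?_
    calc (κ * 2 * (4/d)^d) * s^(d+1) = κ * (2*s * (4*s/d)^d) := by rw [h1]; ring
      _ ≤ 2 * ε * r^(d+1) := hchain
      _ = (2 * ε * NB) * s^(d+1) := by rw [h2]; ring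
  have hεBv : 2 * εB * NB = κ * (4/d)^d / 2 := by
    rw [hεBdef]; field_simp; ring
  have h3 : 2 * ε * NB ≤ 2 * εB * NB :=
    mul_le_mul_of_nonneg_right (by linarith) hNB0.le
  have hpos : 0 < κ * (4/d)^d := mul_pos hκ0 (pow_pos (by positivity) _)
  rw [hεBv] at h3
  linarith
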